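/- (Minimality principle) Let μ₀ be a mass distribution on ℤ^d with finite support and κ > 0. Let T be any infinitive toppling sequence for BS(μ₀, κ) and let V₀ = ⋃_k V_k be the final set of visited sites along T. Then V₀ equals the intersection of all sets V ⊆ ℤ^d for which there exists a function u such that (V, u) is a stabilizing pair for BS(μ₀, κ). -/

import Mathlib

open Filter

namespace Sandpile

/-- Lattice sites of `ℤ^d`. -/
abbrev Site (d : ℕ) := Fin d → ℤ

/-- Two sites are neighbours iff their `ℓ¹`-distance equals `1`. -/
def nbr {d : ℕ} (x y : Site d) : Prop := (∑ i, |x i - y i|) = 1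

/-- The (combinatorial) boundary of a set `V ⊆ ℤ^d`. -/
def bdry {d : ℕ} (V : Set (Site d)) : Set (Site d) :=
  {x | x ∈ V ∧ ∃ y, nbr x y ∧ y ∉ V}

/-- The (combinatorial) interior of a set `V ⊆ ℤ^d`. -/
def intr {d : ℕ} (V : Set (Site d)) : Set (Site d) := V \ bdry V

/-- The discrete Laplacian `Δu(x) = (1/(2d)) ∑_{y ∼ x} (u y - u x)`; the `2d`
neighbours of `x` are exactly the points `x ± eᵢ`. -/
noncomputable def lap {d : ℕ} (u : Site d → ℝ) (x : Site d) : ℝ :=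
  (1 / (2 * (d : ℝ))) *
    ∑ i : Fin d, ((u (x + Pi.single i 1) - u x) + (u (x - Pi.single i 1) - u x))

/-- A mass distribution: nonnegative with finite support. -/
def IsMassDist {d : ℕ} (μ : Site d → ℝ) : Prop :=
  (∀ x, 0 ≤ μ x) ∧ (Function.support μ).Finite

/-- Euclidean norm of a lattice point. -/
noncomputable def enorm {d : ℕ} (x : Site d) : ℝ :=
  Real.sqrt (∑ i, ((x i : ℝ)) ^ 2)

/-- A configuration of the boundary sandpile: visited sites, current mass, odometer. -/
structure Config (d : ℕ) where
  V : Set (Site d)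
  μ : Site d → ℝ
  u : Site d → ℝ

/-- A site is unstable if it is a boundary site of the visited set carrying mass above
the capacity `κ`, or an interior site carrying positive mass. -/
def Unstable {d : ℕ} (κ : ℝ) (c : Config d) (x : Site d) : Prop :=
  (x ∈ bdry c.V ∧ κ < c.μ x) ∨ (x ∈ intr c.V ∧ 0 < c.μ x)

open Classical in
/-- Toppling the site `x`: if `x` is unstable, its mass is distributed equally among its
`2d` neighbours, the odometer at `x` increases by the toppled mass, and the neighbours
of `x` become visited; toppling a stable site changes nothing. -/
noncomputable def topple {d : ℕ} (κ : ℝ) (c : Config d) (x : Site d) : Config d :=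
  if Unstable κ c x then
    { V := c.V ∪ {y | nbr x y}
      μ := fun y => if y = x then 0 else
        if nbr x y then c.μ y + c.μ x / (2 * (d : ℝ)) else c.μ y
      u := fun y => if y = x then c.u y + c.μ y else c.u y }
  else c

/-- The evolution of the boundary sandpile `BS(μ₀, κ)` along a toppling sequence `T`:
start from `V₀ = supp μ₀`, `u₀ = 0`, and at step `k` topple the site `T k`. -/
noncomputable def evolve {d : ℕ} (κ : ℝ) (μ0 : Site d → ℝ) (T : ℕ → Site d) :
    ℕ → Config d
  | 0 => ⟨Function.support μ0, μ0, fun _ => 0⟩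
  | k + 1 => topple κ (evolve κ μ0 T k) (T k)

/-- A toppling sequence is infinitive if every site occurs in it infinitely often. -/
def Infinitive {d : ℕ} (T : ℕ → Site d) : Prop :=
  ∀ x : Site d, {k : ℕ | T k = x}.Infinite

/-- `(V, u)` is a stabilizing pair for `BS(μ₀, κ)`: `V` is finite, contains the support
of `μ₀`, and `u : ℤ^d → [0,∞)` vanishes outside the interior of `V`, satisfies
`Δu = -μ₀` on the interior of `V`, `u = 0` on `∂V`, and `μ₀ + Δu ≤ κ` on `∂V`. -/
def IsStabilizingPair {d : ℕ} (μ0 : Site d → ℝ) (κ : ℝ)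
    (V : Set (Site d)) (u : Site d → ℝ) : Prop :=
  V.Finite ∧ Function.support μ0 ⊆ V ∧ (∀ x, 0 ≤ u x) ∧
  (∀ x ∉ intr V, u x = 0) ∧
  (∀ x ∈ intr V, lap u x = -μ0 x) ∧
  (∀ x ∈ bdry V, u x = 0) ∧
  (∀ x ∈ bdry V, μ0 x + lap u x ≤ κ)

/-- *The* stabilizing pair of `BS(μ₀, κ)`: a stabilizing pair whose set of sites is
contained in the set of any other stabilizing pair. -/
def IsMinStabilizingPair {d : ℕ} (μ0 : Site d → ℝ) (κ : ℝ)
    (V : Set (Site d)) (u : Site d → ℝ) : Prop :=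
  IsStabilizingPair μ0 κ V u ∧
  ∀ V' u', IsStabilizingPair μ0 κ V' u' → V ⊆ V'

/-- The point mass `n·δ₀` at the origin. -/
def pointMass (d : ℕ) (n : ℝ) : Site d → ℝ := fun x => if x = 0 then n else 0

section Aux
variable {d : ℕ}

lemma nbr_symm {x y : Site d} (h : nbr x y) : nbr y x := by
  unfold nbr at *
  rw [← h]
  exact Finset.sum_congr rfl fun i _ => abs_sub_comm _ _

lemma nbr_add (x : Site d) (i : Fin d) : nbr x (x + Pi.single i 1) := by
  unfold nbr
  have : ∀ j, |x j - (x + Pi.single i 1 : Site d) j| = if j = i then 1 else 0 := by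
    intro j
    by_cases hj : j = i
    · subst hj; simp
    · simp [Pi.single_eq_of_ne hj, if_neg hj]
  simp only [this]
  simp

lemma nbr_sub (x : Site d) (i : Fin d) : nbr x (x - Pi.single i 1) := by
  unfold nbr
  have : ∀ j, |x j - (x - Pi.single i 1 : Site d) j| = if j = i then 1 else 0 := by
    intro j
    by_cases hj : j = i
    · subst hj; simp
    · simp [Pi.single_eq_of_ne hj, if_neg hj]
  simp only [this]
  simp

lemma not_nbr_self (x : Site d) : ¬ nbr x x := by
  unfold nbr; simp

lemma nbr_iff {x y : Site d} :
    nbr x y ↔ ∃ i, y = x + Pi.single i 1 ∨ y = x - Pi.single i 1 := by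
  constructor
  · intro h
    unfold nbr at h
    have hnn : ∀ j ∈ Finset.univ, (0:ℤ) ≤ |x j - y j| := fun j _ => abs_nonneg _
    -- find i with |x i - y i| ≥ 1
    by_cases hall : ∀ i, x i = y i
    · exfalso; simp [hall] at h
    push_neg at hall
    obtain ⟨i, hi⟩ := hall
    have h1 : (1:ℤ) ≤ |x i - y i| := by
      have := abs_pos.mpr (sub_ne_zero.mpr hi)
      omega
    have hrest : ∀ j ∈ Finset.univ, j ≠ i → x j - y j = 0 := by
      intro j _ hj
      by_contra hne
      have h1j : (1:ℤ) ≤ |x j - y j| := by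
        have := abs_pos.mpr hne; omega
      have hsum : (2:ℤ) ≤ ∑ k, |x k - y k| := by
        have hsub : ({i, j} : Finset (Fin d)) ⊆ Finset.univ := Finset.subset_univ _
        have h2 : ∑ k ∈ ({i, j} : Finset (Fin d)), |x k - y k| ≤ ∑ k, |x k - y k| :=
          Finset.sum_le_sum_of_subset_of_nonneg hsub (fun k _ _ => abs_nonneg _)
        rw [Finset.sum_pair (Ne.symm hj)] at h2
        omega
      omega
    have hi1 : |x i - y i| = 1 := by
      have : ∑ k, |x k - y k| = |x i - y i| := by
        rw [← Finset.sum_subset (Finset.subset_univ {i})]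
        · simp
        · intro j _ hj
          simp only [Finset.mem_singleton] at hj
          rw [hrest j (Finset.mem_univ j) hj]; simp
      omega
    refine ⟨i, ?_⟩
    rcases abs_eq (by norm_num : (0:ℤ) ≤ 1) |>.mp hi1 with hp | hm
    · right; funext j
      by_cases hj : j = i
      · subst hj; simp; omega
      · have := hrest j (Finset.mem_univ j) hj
        simp [Pi.single_eq_of_ne hj]; omega
    · left; funext j
      by_cases hj : j = i
      · subst hj; simp; omega
      · have := hrest j (Finset.mem_univ j) hj
        simp [Pi.single_eq_of_ne hj]; omega
  · rintro ⟨i, rfl | rfl⟩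
    · exact nbr_add x i
    · exact nbr_sub x i

lemma mem_intr_iff {V : Set (Site d)} {x : Site d} :
    x ∈ intr V ↔ x ∈ V ∧ ∀ y, nbr x y → y ∈ V := by
  unfold intr bdry
  constructor
  · rintro ⟨hx, hb⟩
    refine ⟨hx, fun y hy => ?_⟩
    by_contra hyV
    exact hb ⟨hx, y, hy, hyV⟩
  · rintro ⟨hx, hall⟩
    exact ⟨hx, fun hb => hb.2.elim (fun y hy => hy.2 (hall y hy.1))⟩


lemma apply_add_single (x : Site d) (i j : Fin d) :
    (x + Pi.single i 1 : Site d) j = x j + (if j = i then 1 else 0) := by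
  by_cases hj : j = i
  · subst hj; simp
  · simp [Pi.single_eq_of_ne hj, if_neg hj]

lemma apply_sub_single (x : Site d) (i j : Fin d) :
    (x - Pi.single i 1 : Site d) j = x j - (if j = i then 1 else 0) := by
  by_cases hj : j = i
  · subst hj; simp
  · simp [Pi.single_eq_of_ne hj, if_neg hj]

lemma add_single_ne_self (x : Site d) (i : Fin d) : x + Pi.single i 1 ≠ x := by
  intro h
  have := congrFun h i
  rw [apply_add_single] at this; simp at this

lemma sub_single_ne_self (x : Site d) (i : Fin d) : x - Pi.single i 1 ≠ x := by
  intro h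
  have := congrFun h i
  rw [apply_sub_single] at this; simp at this

lemma add_single_ne_sub_single (x : Site d) (i j : Fin d) :
    x + Pi.single i 1 ≠ x - Pi.single j 1 := by
  intro h
  have := congrFun h i
  rw [apply_add_single, apply_sub_single] at this
  by_cases hij : i = j <;> simp [hij] at this <;> omega

lemma add_single_inj (x : Site d) {i j : Fin d}
    (h : x + Pi.single i 1 = x + Pi.single j 1) : i = j := by
  by_contra hij
  have := congrFun h i
  rw [apply_add_single, apply_add_single] at this
  simp [hij] at this

lemma sub_single_inj (x : Site d) {i j : Fin d}
    (h : x - Pi.single i 1 = x - Pi.single j 1) : i = j := by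
  by_contra hij
  have := congrFun h i
  rw [apply_sub_single, apply_sub_single] at this
  simp [hij] at this

/-- The finset of the 2d neighbours of a site. -/
noncomputable def nbrFinset (x : Site d) : Finset (Site d) :=
  Finset.univ.image (fun p : Fin d × Bool =>
    if p.2 then x + Pi.single p.1 1 else x - Pi.single p.1 1)

lemma nbrFun_injective (x : Site d) : Function.Injective (fun p : Fin d × Bool =>
    if p.2 then x + Pi.single p.1 1 else x - Pi.single p.1 1) := by
  rintro ⟨i, bi⟩ ⟨j, bj⟩ h
  simp only at h
  cases bi <;> cases bj <;> simp only [if_true, if_false, Bool.false_eq_true] at h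
  · rw [sub_single_inj x h]
  · exact absurd h.symm (add_single_ne_sub_single x j i)
  · exact absurd h (add_single_ne_sub_single x i j)
  · rw [add_single_inj x h]

lemma mem_nbrFinset {x y : Site d} : y ∈ nbrFinset x ↔ nbr x y := by
  rw [nbr_iff]
  constructor
  · intro hy
    simp only [nbrFinset, Finset.mem_image] at hy
    obtain ⟨⟨i, b⟩, _, hb⟩ := hy
    cases b
    · exact ⟨i, Or.inr (by simpa using hb.symm)⟩
    · exact ⟨i, Or.inl (by simpa using hb.symm)⟩
  · rintro ⟨i, rfl | rfl⟩
    · exact Finset.mem_image.mpr ⟨⟨i, true⟩, Finset.mem_univ _, rfl⟩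
    · exact Finset.mem_image.mpr ⟨⟨i, false⟩, Finset.mem_univ _, rfl⟩

lemma card_nbrFinset (x : Site d) : (nbrFinset x).card = 2 * d := by
  rw [nbrFinset, Finset.card_image_of_injective _ (nbrFun_injective x)]
  simp [Fintype.card_prod]
  ring

lemma lap_add (u v : Site d → ℝ) (x : Site d) :
    lap (fun y => u y + v y) x = lap u x + lap v x := by
  unfold lap
  rw [← mul_add, ← Finset.sum_add_distrib]
  congr 1
  apply Finset.sum_congr rfl
  intro i _
  ring

lemma lap_sub (u v : Site d → ℝ) (x : Site d) :
    lap (fun y => u y - v y) x = lap u x - lap v x := by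
  unfold lap
  rw [← mul_sub, ← Finset.sum_sub_distrib]
  congr 1
  apply Finset.sum_congr rfl
  intro i _
  ring

open Classical in
lemma lap_point (hd : 0 < d) (m : ℝ) (x y : Site d) :
    lap (fun z => if z = x then m else 0) y =
      if y = x then -m else if nbr x y then m / (2 * d) else 0 := by
  classical
  have hd' : (0:ℝ) < 2 * d := by positivity
  unfold lap
  by_cases hyx : y = x
  · subst hyx
    rw [if_pos rfl]
    have : ∀ i : Fin d, (((if (y + Pi.single i 1 : Site d) = y then m else 0) -
        (if y = y then m else 0)) + ((if (y - Pi.single i 1 : Site d) = y then m else 0) -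
        (if y = y then m else 0))) = -2 * m := by
      intro i
      rw [if_neg (add_single_ne_self y i), if_neg (sub_single_ne_self y i), if_pos rfl]
      ring
    rw [Finset.sum_congr rfl (fun i _ => this i)]
    rw [Finset.sum_const]
    simp
    field_simp
  · rw [if_neg hyx]
    by_cases hnbr : nbr x y
    · rw [if_pos hnbr]
      obtain ⟨i, hi | hi⟩ := nbr_iff.mp hnbr
      · -- y = x + e i, so y - e i = x
        have key : ∀ j : Fin d, (((if (y + Pi.single j 1 : Site d) = x then m else 0) -
            (if y = x then m else 0)) + ((if (y - Pi.single j 1 : Site d) = x then m else 0) -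
            (if y = x then m else 0))) = if j = i then m else 0 := by
          intro j
          rw [if_neg hyx]
          have h1 : (y + Pi.single j 1 : Site d) ≠ x := by
            subst hi
            intro h
            have := congrFun h i
            rw [apply_add_single, apply_add_single] at this
            by_cases hji : j = i <;> simp [hji] at this <;> omega
          rw [if_neg h1]
          by_cases hji : j = i
          · subst hji
            have h2 : (y - Pi.single j 1 : Site d) = x := by
              subst hi; funext t
              rw [apply_sub_single, apply_add_single]
              ring
            rw [if_pos h2, if_pos rfl]
            ring
          · have h2 : (y - Pi.single j 1 : Site d) ≠ x := by
              subst hi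
              intro h
              have := congrFun h j
              rw [apply_sub_single, apply_add_single] at this
              simp [hji, Ne.symm hji] at this
            rw [if_neg h2, if_neg hji]
            ring
        rw [Finset.sum_congr rfl (fun j _ => key j), Finset.sum_ite_eq' Finset.univ i]
        simp
        field_simp
      · -- y = x - e i, so y + e i = x
        have key : ∀ j : Fin d, (((if (y + Pi.single j 1 : Site d) = x then m else 0) -
            (if y = x then m else 0)) + ((if (y - Pi.single j 1 : Site d) = x then m else 0) -
            (if y = x then m else 0))) = if j = i then m else 0 := by
          intro j
          rw [if_neg hyx]
          have h1 : (y - Pi.single j 1 : Site d) ≠ x := by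
            subst hi
            intro h
            have := congrFun h i
            rw [apply_sub_single, apply_sub_single] at this
            by_cases hji : j = i <;> simp [hji] at this <;> omega
          rw [if_neg h1]
          by_cases hji : j = i
          · subst hji
            have h2 : (y + Pi.single j 1 : Site d) = x := by
              subst hi; funext t
              rw [apply_add_single, apply_sub_single]
              ring
            rw [if_pos h2, if_pos rfl]
            ring
          · have h2 : (y + Pi.single j 1 : Site d) ≠ x := by
              subst hi
              intro h
              have := congrFun h j
              rw [apply_add_single, apply_sub_single] at this
              simp [hji, Ne.symm hji] at this
            rw [if_neg h2, if_neg hji]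
            ring
        rw [Finset.sum_congr rfl (fun j _ => key j), Finset.sum_ite_eq' Finset.univ i]
        simp
        field_simp
    · rw [if_neg hnbr]
      have key : ∀ j : Fin d, (((if (y + Pi.single j 1 : Site d) = x then m else 0) -
          (if y = x then m else 0)) + ((if (y - Pi.single j 1 : Site d) = x then m else 0) -
          (if y = x then m else 0))) = 0 := by
        intro j
        rw [if_neg hyx]
        have h1 : (y + Pi.single j 1 : Site d) ≠ x := by
          intro h
          apply hnbr
          rw [nbr_iff]
          refine ⟨j, Or.inr ?_⟩
          funext t
          have := congrFun h t
          rw [apply_add_single] at this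
          rw [apply_sub_single]
          omega
        have h2 : (y - Pi.single j 1 : Site d) ≠ x := by
          intro h
          apply hnbr
          rw [nbr_iff]
          refine ⟨j, Or.inl ?_⟩
          funext t
          have := congrFun h t
          rw [apply_sub_single] at this
          rw [apply_add_single]
          omega
        rw [if_neg h1, if_neg h2]
        ring
      rw [Finset.sum_congr rfl (fun j _ => key j)]
      simp

/-- squared norm test function -/
noncomputable def sq (x : Site d) : ℝ := ∑ i, ((x i : ℝ))^2

lemma sq_nonneg' (x : Site d) : 0 ≤ sq x := Finset.sum_nonneg fun i _ => sq_nonneg _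

lemma lap_sq (hd : 0 < d) (x : Site d) : lap sq x = 1 := by
  have key : ∀ i : Fin d, (sq (x + Pi.single i 1 : Site d) - sq x) +
      (sq (x - Pi.single i 1 : Site d) - sq x) = 2 := by
    intro i
    unfold sq
    rw [← Finset.sum_sub_distrib, ← Finset.sum_sub_distrib, ← Finset.sum_add_distrib]
    have : ∀ j : Fin d, ((((x + Pi.single i 1 : Site d) j : ℝ)^2 - (x j : ℝ)^2) +
        (((x - Pi.single i 1 : Site d) j : ℝ)^2 - (x j : ℝ)^2)) = if j = i then 2 else 0 := by
      intro j
      rw [apply_add_single, apply_sub_single]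
      by_cases hj : j = i
      · simp only [if_pos hj]
        push_cast
        ring
      · simp only [if_neg hj]
        push_cast
        ring
    rw [Finset.sum_congr rfl (fun j _ => this j), Finset.sum_ite_eq' Finset.univ i]
    simp
  unfold lap
  rw [Finset.sum_congr rfl (fun i _ => key i), Finset.sum_const]
  simp
  field_simp


end Aux

section Dyn
variable {d : ℕ} (κ : ℝ) (μ0 : Site d → ℝ) (T : ℕ → Site d)

/-- `x` was actually toppled at some step before time `k`. -/
def Toppled (k : ℕ) (x : Site d) : Prop :=
  ∃ j, j < k ∧ T j = x ∧ Unstable κ (evolve κ μ0 T j) x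

lemma evolve_succ (k : ℕ) :
    evolve κ μ0 T (k + 1) = topple κ (evolve κ μ0 T k) (T k) := rfl

variable {κ μ0 T}

lemma topple_stable {c : Config d} {x : Site d} (h : ¬ Unstable κ c x) :
    topple κ c x = c := by
  rw [topple, if_neg h]

lemma topple_V {c : Config d} {x : Site d} (h : Unstable κ c x) :
    (topple κ c x).V = c.V ∪ {y | nbr x y} := by
  rw [topple, if_pos h]

open Classical in
lemma topple_μ {c : Config d} {x : Site d} (h : Unstable κ c x) (y : Site d) :
    (topple κ c x).μ y = if y = x then 0 else
      if nbr x y then c.μ y + c.μ x / (2 * (d : ℝ)) else c.μ y := by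
  rw [topple, if_pos h]

lemma topple_u {c : Config d} {x : Site d} (h : Unstable κ c x) (y : Site d) :
    (topple κ c x).u y = c.u y + (if y = x then c.μ x else 0) := by
  rw [topple, if_pos h]
  by_cases hy : y = x
  · subst hy; simp
  · simp [hy]

lemma Unstable.mem_V {c : Config d} {x : Site d} (h : Unstable κ c x) : x ∈ c.V := by
  rcases h with ⟨h, _⟩ | ⟨h, _⟩
  · exact h.1
  · exact h.1

lemma Toppled.mono {k l : ℕ} (hkl : k ≤ l) {x : Site d} (h : Toppled κ μ0 T k x) :
    Toppled κ μ0 T l x := by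
  obtain ⟨j, hj, hT, hU⟩ := h
  exact ⟨j, lt_of_lt_of_le hj hkl, hT, hU⟩

lemma V_mono {k l : ℕ} (hkl : k ≤ l) : (evolve κ μ0 T k).V ⊆ (evolve κ μ0 T l).V := by
  induction l with
  | zero => simp_all
  | succ n ih =>
    rcases Nat.lt_or_ge k (n+1) with hlt | hge
    · have hkn : k ≤ n := by omega
      refine subset_trans (ih hkn) ?_
      rw [evolve_succ]
      by_cases hU : Unstable κ (evolve κ μ0 T n) (T n)
      · rw [topple_V hU]; exact Set.subset_union_left
      · rw [topple_stable hU]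
    · have : k = n + 1 := by omega
      subst this; exact subset_refl _

/-- The fundamental invariants of the evolution, proved by simultaneous induction. -/
lemma inv (hd : 0 < d) (hμ0 : IsMassDist μ0) (hκ : 0 < κ) (k : ℕ) :
    (evolve κ μ0 T k).V.Finite ∧
    (∀ x, 0 ≤ (evolve κ μ0 T k).μ x) ∧
    (∀ x, (evolve κ μ0 T k).μ x ≠ 0 → x ∈ (evolve κ μ0 T k).V) ∧
    (∀ x, (evolve κ μ0 T k).μ x = μ0 x + lap (evolve κ μ0 T k).u x) ∧
    (∀ x, 0 ≤ (evolve κ μ0 T k).u x) ∧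
    (∀ x, (evolve κ μ0 T k).u x ≠ 0 → Toppled κ μ0 T k x) ∧
    (∀ x, Toppled κ μ0 T k x → x ∈ (evolve κ μ0 T k).V ∧
        ∀ y, nbr x y → y ∈ (evolve κ μ0 T k).V) ∧
    (∀ x ∈ (evolve κ μ0 T k).V, μ0 x = 0 → ¬ Toppled κ μ0 T k x →
        κ / (2 * (d : ℝ)) < (evolve κ μ0 T k).μ x) := by
  have h2d : (0:ℝ) < 2 * d := by positivity
  induction k with
  | zero =>
    refine ⟨hμ0.2, hμ0.1, fun x hx => hx, ?_, fun x => le_refl 0, ?_, ?_, ?_⟩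
    · intro x
      have : lap (evolve κ μ0 T 0).u x = 0 := by
        show lap (fun _ => (0:ℝ)) x = 0
        unfold lap; simp
      rw [this]
      show μ0 x = μ0 x + 0
      ring
    · intro x hx; exact absurd rfl hx
    · rintro x ⟨j, hj, _⟩; omega
    · intro x hx hμx _
      exact absurd hμx hx
  | succ n ih =>
    obtain ⟨iFin, iPos, iSupp, iLap, iuPos, iuSupp, iTop, iRet⟩ := ih
    set c := evolve κ μ0 T n with hc
    set x := T n with hx
    by_cases hU : Unstable κ c x
    · have hV := topple_V (c := c) (x := x) hU
      have hμ := topple_μ (c := c) (x := x) hU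
      have hu := topple_u (c := c) (x := x) hU
      have hTopSucc : ∀ y, Toppled κ μ0 T (n+1) y ↔ (Toppled κ μ0 T n y ∨ y = x) := by
        intro y
        constructor
        · rintro ⟨j, hj, hTj, hUj⟩
          rcases Nat.lt_or_ge j n with hjn | hjn
          · exact Or.inl ⟨j, hjn, hTj, hUj⟩
          · have : j = n := by omega
            subst this
            exact Or.inr hTj.symm
        · rintro (⟨j, hj, hTj, hUj⟩ | rfl)
          · exact ⟨j, by omega, hTj, hUj⟩
          · exact ⟨n, by omega, rfl, hU⟩
      rw [evolve_succ]
      refine ⟨?_, ?_, ?_, ?_, ?_, ?_, ?_, ?_⟩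
      · rw [hV]
        refine iFin.union ?_
        have : {y | nbr x y} = ↑(nbrFinset x) := by
          ext y; simp [mem_nbrFinset]
        rw [this]
        exact (nbrFinset x).finite_toSet
      · intro y
        rw [hμ y]
        by_cases h1 : y = x
        · rw [if_pos h1]
        · rw [if_neg h1]
          by_cases h2 : nbr x y
          · rw [if_pos h2]
            have := iPos y
            have := iPos x
            positivity
          · rw [if_neg h2]; exact iPos y
      · intro y hy
        rw [hμ y] at hy
        rw [hV]
        by_cases h1 : y = x
        · rw [if_pos h1] at hy; exact absurd rfl hy
        · rw [if_neg h1] at hy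
          by_cases h2 : nbr x y
          · exact Or.inr h2
          · rw [if_neg h2] at hy
            exact Or.inl (iSupp y hy)
      · intro y
        have huf : (topple κ c x).u = fun z => c.u z + (if z = x then c.μ x else 0) := by
          funext z; exact hu z
        rw [huf, hμ y, lap_add, lap_point hd (c.μ x) x y]
        by_cases h1 : y = x
        · rw [if_pos h1, if_pos h1, h1]; linarith [iLap x]
        · rw [if_neg h1, if_neg h1]
          by_cases h2 : nbr x y
          · rw [if_pos h2, if_pos h2]; linarith [iLap y]
          · rw [if_neg h2, if_neg h2]; linarith [iLap y]
      · intro y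
        rw [hu y]
        by_cases h1 : y = x
        · rw [if_pos h1]
          have := iuPos y
          have := iPos x
          positivity
        · rw [if_neg h1]
          simpa using iuPos y
      · intro y hy
        rw [hu y] at hy
        rw [hTopSucc y]
        by_cases h1 : y = x
        · exact Or.inr h1
        · rw [if_neg h1, add_zero] at hy
          exact Or.inl (iuSupp y hy)
      · intro y hy
        rw [hTopSucc y] at hy
        rw [hV]
        rcases hy with hy | rfl
        · obtain ⟨h1, h2⟩ := iTop y hy
          exact ⟨Or.inl h1, fun z hz => Or.inl (h2 z hz)⟩
        · exact ⟨Or.inl hU.mem_V, fun z hz => Or.inr hz⟩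
      · intro y hyV hy0 hyT
        have hyT' : ¬ Toppled κ μ0 T n y := fun h => hyT (h.mono (by omega))
        have hyx : y ≠ x := by
          intro h
          exact hyT ((hTopSucc y).mpr (Or.inr h))
        rw [hμ y, if_neg hyx]
        rw [hV] at hyV
        by_cases hyVn : y ∈ c.V
        · have hIH := iRet y hyVn hy0 hyT'
          by_cases h2 : nbr x y
          · rw [if_pos h2]
            have h3 : 0 ≤ c.μ x / (2 * (d:ℝ)) := by
              have := iPos x; positivity
            linarith
          · rw [if_neg h2]; exact hIH
        · have h2 : nbr x y := by
            rcases hyV with h | h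
            · exact absurd h hyVn
            · exact h
          rw [if_pos h2]
          have hμy : c.μ y = 0 := by
            by_contra h
            exact hyVn (iSupp y h)
          have hκm : κ < c.μ x := by
            rcases hU with ⟨_, h⟩ | ⟨hi, _⟩
            · exact h
            · exact absurd ((mem_intr_iff.mp hi).2 y h2) hyVn
          rw [hμy, zero_add]
          exact div_lt_div_of_pos_right hκm h2d  -- κ/2d < m/2d
    · rw [evolve_succ, topple_stable hU]
      have hTopSucc : ∀ y, Toppled κ μ0 T (n+1) y ↔ Toppled κ μ0 T n y := by
        intro y
        constructor
        · rintro ⟨j, hj, hTj, hUj⟩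
          rcases Nat.lt_or_ge j n with hjn | hjn
          · exact ⟨j, hjn, hTj, hUj⟩
          · have : j = n := by omega
            subst this
            subst hTj
            exact absurd hUj hU
        · exact fun h => h.mono (by omega)
      refine ⟨iFin, iPos, iSupp, iLap, iuPos, ?_, ?_, ?_⟩
      · intro y hy
        rw [hTopSucc y]
        exact iuSupp y hy
      · intro y hy
        rw [hTopSucc y] at hy
        exact iTop y hy
      · intro y h1 h2 h3
        rw [hTopSucc y] at h3
        exact iRet y h1 h2 h3

lemma u_mono (hd : 0 < d) (hμ0 : IsMassDist μ0) (hκ : 0 < κ) {k l : ℕ} (hkl : k ≤ l)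
    (x : Site d) : (evolve κ μ0 T k).u x ≤ (evolve κ μ0 T l).u x := by
  induction l with
  | zero => simp_all
  | succ n ih =>
    rcases Nat.lt_or_ge k (n+1) with hlt | hge
    · have hkn : k ≤ n := by omega
      refine le_trans (ih hkn) ?_
      rw [evolve_succ]
      by_cases hU : Unstable κ (evolve κ μ0 T n) (T n)
      · rw [topple_u hU]
        have := (inv (T := T) hd hμ0 hκ n).2.1 (T n)
        by_cases h1 : x = T n
        · rw [if_pos h1]; linarith
        · rw [if_neg h1]; linarith
      · rw [topple_stable hU]
    · have : k = n + 1 := by omega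
      subst this; exact le_refl _

end Dyn

section Sums
variable {d : ℕ} {κ : ℝ} {μ0 : Site d → ℝ} {T : ℕ → Site d}

lemma sum_nbrFinset_sq (hd : 0 < d) (x : Site d) :
    ∑ y ∈ nbrFinset x, sq y = 2 * d + 2 * d * sq x := by
  have h2d : (0:ℝ) < 2 * d := by positivity
  have him : ∑ y ∈ nbrFinset x, sq y = ∑ p : Fin d × Bool,
      sq (if p.2 then x + Pi.single p.1 1 else x - Pi.single p.1 1) := by
    rw [nbrFinset, Finset.sum_image]
    intro p _ q _ h
    exact nbrFun_injective x h
  rw [him, Fintype.sum_prod_type]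
  have : ∀ i : Fin d, (∑ b : Bool, sq (if b then x + Pi.single i 1 else x - Pi.single i 1))
      = (sq (x + Pi.single i 1 : Site d) - sq x) + (sq (x - Pi.single i 1 : Site d) - sq x)
        + 2 * sq x := by
    intro i
    simp [Fintype.sum_bool]
    ring
  rw [Finset.sum_congr rfl (fun i _ => this i), Finset.sum_add_distrib, Finset.sum_const]
  have hlap := lap_sq hd x
  unfold lap at hlap
  have : ∑ i : Fin d, ((sq (x + Pi.single i 1 : Site d) - sq x) +
      (sq (x - Pi.single i 1 : Site d) - sq x)) = 2 * d := by
    have := hlap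
    field_simp at this
    linarith [this]
  rw [this]
  simp
  ring

open Classical in
lemma sum_inv (hd : 0 < d) (hμ0 : IsMassDist μ0) (hκ : 0 < κ) (k : ℕ)
    (F : Finset (Site d)) (hF : (evolve κ μ0 T k).V ⊆ ↑F) :
    (∑ y ∈ F, (evolve κ μ0 T k).μ y = ∑ y ∈ F, μ0 y) ∧
    (∑ y ∈ F, (evolve κ μ0 T k).μ y * sq y
      = ∑ y ∈ F, μ0 y * sq y + ∑ y ∈ F, (evolve κ μ0 T k).u y) := by
  have h2d : (0:ℝ) < 2 * d := by positivity
  induction k with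
  | zero =>
    constructor
    · rfl
    · show ∑ y ∈ F, μ0 y * sq y = ∑ y ∈ F, μ0 y * sq y + ∑ y ∈ F, (fun _ => (0:ℝ)) y
      simp
  | succ n ih =>
    have hVn : (evolve κ μ0 T n).V ⊆ ↑F :=
      subset_trans (V_mono (le_of_lt (Nat.lt_succ_self n))) hF
    obtain ⟨ihm, ihs⟩ := ih hVn
    set c := evolve κ μ0 T n with hc
    set x := T n with hx
    by_cases hU : Unstable κ c x
    · have hV := topple_V (c := c) (x := x) hU
      have hμ := topple_μ (c := c) (x := x) hU
      have hu := topple_u (c := c) (x := x) hU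
      set m := c.μ x with hm
      have hxF : x ∈ F := hVn hU.mem_V
      have hnbrF : ∀ y ∈ nbrFinset x, y ∈ F := by
        intro y hy
        apply hF
        rw [evolve_succ, hV]
        exact Or.inr (mem_nbrFinset.mp hy)
      -- the difference function
      have hdiff : ∀ y, (evolve κ μ0 T (n+1)).μ y = c.μ y +
          (if y = x then -m else if nbr x y then m / (2*(d:ℝ)) else 0) := by
        intro y
        rw [evolve_succ, hμ y]
        by_cases h1 : y = x
        · rw [if_pos h1, if_pos h1, h1]; ring
        · rw [if_neg h1, if_neg h1]
          by_cases h2 : nbr x y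
          · rw [if_pos h2, if_pos h2]
          · rw [if_neg h2, if_neg h2]; ring
      have hudiff : ∀ y, (evolve κ μ0 T (n+1)).u y = c.u y + (if y = x then m else 0) := by
        intro y
        rw [evolve_succ, hu y]
      have hfilter : (F.erase x).filter (fun y => nbr x y) = nbrFinset x := by
        ext y
        simp only [Finset.mem_filter, Finset.mem_erase, mem_nbrFinset]
        constructor
        · rintro ⟨_, h⟩; exact h
        · intro h
          refine ⟨⟨?_, hnbrF y (mem_nbrFinset.mpr h)⟩, h⟩
          intro hyx
          rw [hyx] at h
          exact not_nbr_self x h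
      constructor
      · -- mass conservation
        have : ∑ y ∈ F, (evolve κ μ0 T (n+1)).μ y = ∑ y ∈ F, c.μ y +
            ∑ y ∈ F, (if y = x then -m else if nbr x y then m / (2*(d:ℝ)) else 0) := by
          rw [← Finset.sum_add_distrib]
          exact Finset.sum_congr rfl fun y _ => hdiff y
        rw [this, ihm]
        have hsg : ∑ y ∈ F, (if y = x then -m else if nbr x y then m / (2*(d:ℝ)) else 0) = 0 := by
          rw [← Finset.add_sum_erase F _ hxF, if_pos rfl]
          have : ∀ y ∈ F.erase x, (if y = x then -m else if nbr x y then m / (2*(d:ℝ)) else 0)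
              = if nbr x y then m / (2*(d:ℝ)) else 0 := by
            intro y hy
            rw [if_neg (Finset.mem_erase.mp hy).1]
          rw [Finset.sum_congr rfl this, ← Finset.sum_filter, hfilter, Finset.sum_const,
            card_nbrFinset]
          rw [nsmul_eq_mul]; push_cast
          rw [mul_comm (2 * (d:ℝ)), div_mul_cancel₀ m (ne_of_gt h2d)]; ring
        rw [hsg, add_zero]
      · -- second moment
        have : ∑ y ∈ F, (evolve κ μ0 T (n+1)).μ y * sq y = ∑ y ∈ F, c.μ y * sq y +
            ∑ y ∈ F, (if y = x then -m else if nbr x y then m / (2*(d:ℝ)) else 0) * sq y := by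
          rw [← Finset.sum_add_distrib]
          refine Finset.sum_congr rfl fun y _ => ?_
          rw [hdiff y]; ring
        rw [this, ihs]
        have hsg : ∑ y ∈ F, (if y = x then -m else if nbr x y then m / (2*(d:ℝ)) else 0) * sq y
            = m := by
          rw [← Finset.add_sum_erase F _ hxF, if_pos rfl]
          have : ∀ y ∈ F.erase x, (if y = x then -m else if nbr x y then m / (2*(d:ℝ)) else 0)
              * sq y = if nbr x y then m / (2*(d:ℝ)) * sq y else 0 := by
            intro y hy
            rw [if_neg (Finset.mem_erase.mp hy).1]
            by_cases h2 : nbr x y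
            · rw [if_pos h2, if_pos h2]
            · rw [if_neg h2, if_neg h2]; ring
          rw [Finset.sum_congr rfl this, ← Finset.sum_filter, hfilter, ← Finset.mul_sum,
            sum_nbrFinset_sq hd x]
          field_simp
          ring
        have hsu : ∑ y ∈ F, (evolve κ μ0 T (n+1)).u y = ∑ y ∈ F, c.u y + m := by
          have : ∑ y ∈ F, (evolve κ μ0 T (n+1)).u y = ∑ y ∈ F, c.u y +
              ∑ y ∈ F, (if y = x then m else 0) := by
            rw [← Finset.sum_add_distrib]
            exact Finset.sum_congr rfl fun y _ => hudiff y
          rw [this, Finset.sum_ite_eq' F x (fun _ => m), if_pos hxF]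
        rw [hsg, hsu]
        ring
    · rw [evolve_succ, topple_stable hU]
      exact ⟨ihm, ihs⟩

end Sums

section Geom
variable {d : ℕ}

open Classical in
lemma card_le_pow_of_bdry (hd : 2 ≤ d) (W B : Finset (Site d))
    (hB : ∀ x : Site d, x ∈ bdry (↑W : Set (Site d)) → x ∈ B) :
    W.card ≤ B.card ^ d := by
  haveI : Nontrivial (Fin d) := Fin.nontrivial_iff_two_le.mpr hd
  have key : ∀ i : Fin d, ∀ c ∈ W.image (fun x => x i), ∃ y ∈ B, y i = c := by
    intro i c hc
    obtain ⟨x, hxW, hxc⟩ := Finset.mem_image.mp hc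
    obtain ⟨j, hj⟩ := exists_ne i
    set L := W.filter (fun y => ∀ t, t ≠ j → y t = x t) with hL
    have hxL : x ∈ L := Finset.mem_filter.mpr ⟨hxW, fun t _ => rfl⟩
    obtain ⟨y, hyL, hymax⟩ := L.exists_max_image (fun y => y j) ⟨x, hxL⟩
    have hyW : y ∈ W := (Finset.mem_filter.mp hyL).1
    have hyx : ∀ t, t ≠ j → y t = x t := (Finset.mem_filter.mp hyL).2
    have hout : (y + Pi.single j 1 : Site d) ∉ W := by
      intro hin
      have hinL : (y + Pi.single j 1 : Site d) ∈ L := by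
        refine Finset.mem_filter.mpr ⟨hin, fun t ht => ?_⟩
        rw [apply_add_single, if_neg ht, add_zero]
        exact hyx t ht
      have := hymax _ hinL
      rw [apply_add_single, if_pos rfl] at this
      omega
    have hbd : y ∈ bdry (↑W : Set (Site d)) :=
      ⟨hyW, ⟨y + Pi.single j 1, nbr_add y j, fun h => hout h⟩⟩
    exact ⟨y, hB y hbd, by rw [hyx i (fun h => hj h.symm), hxc]⟩
  have hsub : W ⊆ Fintype.piFinset (fun i => W.image (fun x => x i)) := by
    intro x hx
    rw [Fintype.mem_piFinset]
    exact fun i => Finset.mem_image_of_mem _ hx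
  calc W.card ≤ (Fintype.piFinset (fun i => W.image (fun x => x i))).card :=
        Finset.card_le_card hsub
    _ = ∏ i, (W.image (fun x => x i)).card := by rw [Fintype.card_piFinset]
    _ ≤ ∏ _i : Fin d, B.card := by
        refine Finset.prod_le_prod' ?_
        intro i _
        set g : ℤ → Site d := fun c =>
          if h : c ∈ W.image (fun x => x i) then (key i c h).choose else (fun _ => 0) with hg
        refine Finset.card_le_card_of_injOn g ?_ ?_
        · intro c hc
          have hc' : c ∈ W.image (fun x => x i) := by simpa using hc
          simp only [hg, Finset.mem_coe, dif_pos hc']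
          exact (key i c hc').choose_spec.1
        · intro c1 h1 c2 h2 heq
          simp only [Finset.coe_image] at h1 h2
          have h1' : c1 ∈ W.image (fun x => x i) := by
            simpa [Finset.mem_coe, Finset.coe_image] using h1
          have h2' : c2 ∈ W.image (fun x => x i) := by
            simpa [Finset.mem_coe, Finset.coe_image] using h2
          rw [hg] at heq
          simp only [dif_pos h1', dif_pos h2'] at heq
          rw [← (key i c1 h1').choose_spec.2, ← (key i c2 h2').choose_spec.2, heq]
    _ = B.card ^ d := by rw [Finset.prod_const]; simp
end Geom

section Stab
variable {d : ℕ} {κ : ℝ} {μ0 : Site d → ℝ} {T : ℕ → Site d}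

open Classical in
lemma V_eventually_const (hd : 2 ≤ d) (hμ0 : IsMassDist μ0) (hκ : 0 < κ) :
    ∃ K : ℕ, ∀ k : ℕ, (evolve κ μ0 T k).V ⊆ (evolve κ μ0 T K).V := by
  have hd1 : 0 < d := by omega
  have h2d : (0:ℝ) < 2 * d := by positivity
  have fin : ∀ k, (evolve κ μ0 T k).V.Finite := fun k => (inv (T := T) hd1 hμ0 hκ k).1
  set S0 := hμ0.2.toFinset with hS0
  set M := ∑ y ∈ S0, μ0 y with hM
  set n1 := ⌈2 * (d:ℝ) * M / κ⌉₊ with hn1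
  set N := (S0.card + n1) ^ d with hN
  set g : ℕ → ℕ := fun k => ((fin k).toFinset).card with hg
  -- uniform bound on g
  have hgN : ∀ k, g k ≤ N := by
    intro k
    set Fk := (fin k).toFinset with hFk
    have hFkV : ↑Fk = (evolve κ μ0 T k).V := (fin k).coe_toFinset
    have hS0sub : S0 ⊆ Fk := by
      intro y hy
      rw [hFk, Set.Finite.mem_toFinset]
      have : y ∈ Function.support μ0 := by
        rw [hS0, Set.Finite.mem_toFinset] at hy
        exact hy
      exact V_mono (Nat.zero_le k) this
    set NT := Fk.filter (fun y => μ0 y = 0 ∧ ¬ Toppled κ μ0 T k y) with hNT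
    -- card NT ≤ n1
    have hNTcard : NT.card ≤ n1 := by
      have hlow : ∀ y ∈ NT, κ / (2 * (d:ℝ)) ≤ (evolve κ μ0 T k).μ y := by
        intro y hy
        rw [hNT, Finset.mem_filter] at hy
        obtain ⟨hyF, hy0, hyT⟩ := hy
        have hyV : y ∈ (evolve κ μ0 T k).V := by
          rw [← hFkV]; exact hyF
        exact le_of_lt ((inv (T := T) hd1 hμ0 hκ k).2.2.2.2.2.2.2 y hyV hy0 hyT)
      have hsum : (NT.card : ℝ) * (κ / (2 * (d:ℝ))) ≤ M := by
        calc (NT.card : ℝ) * (κ / (2 * (d:ℝ))) = ∑ _y ∈ NT, κ / (2 * (d:ℝ)) := by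
              rw [Finset.sum_const, nsmul_eq_mul]
          _ ≤ ∑ y ∈ NT, (evolve κ μ0 T k).μ y := Finset.sum_le_sum hlow
          _ ≤ ∑ y ∈ Fk, (evolve κ μ0 T k).μ y := by
              refine Finset.sum_le_sum_of_subset_of_nonneg (Finset.filter_subset _ _) ?_
              intro y _ _
              exact (inv (T := T) hd1 hμ0 hκ k).2.1 y
          _ = ∑ y ∈ Fk, μ0 y := by
              refine (sum_inv hd1 hμ0 hκ k Fk ?_).1
              rw [hFkV]
          _ = M := by
              rw [hM]
              refine (Finset.sum_subset hS0sub ?_).symm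
              intro y _ hy
              rw [hS0, Set.Finite.mem_toFinset, Function.mem_support, not_not] at hy
              exact hy
      have hcard_real : (NT.card : ℝ) ≤ 2 * (d:ℝ) * M / κ := by
        have h1 : (NT.card : ℝ) * κ ≤ 2 * d * M := by
          have h2 := mul_le_mul_of_nonneg_right hsum (le_of_lt h2d)
          calc (NT.card:ℝ) * κ = (NT.card:ℝ) * (κ / (2*d)) * (2*d) := by field_simp
            _ ≤ M * (2*d) := h2
            _ = 2*d*M := by ring
        rw [le_div_iff₀ hκ]
        exact h1
      rw [hn1]
      have hceil := Nat.le_ceil (2 * (d:ℝ) * M / κ)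
      exact_mod_cast hcard_real.trans hceil
    -- boundary of V_k is inside S0 ∪ NT
    have hbdry : ∀ x : Site d, x ∈ bdry ((fin k).toFinset : Set (Site d)) → x ∈ S0 ∪ NT := by
      intro x hx
      rw [show ((fin k).toFinset : Set (Site d)) = (evolve κ μ0 T k).V from (fin k).coe_toFinset]
        at hx
      obtain ⟨hxV, y, hxy, hyV⟩ := hx
      rw [Finset.mem_union]
      by_cases h0 : μ0 x = 0
      · by_cases hTop : Toppled κ μ0 T k x
        · exfalso
          exact hyV (((inv (T := T) hd1 hμ0 hκ k).2.2.2.2.2.2.1 x hTop).2 y hxy)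
        · right
          rw [hNT, Finset.mem_filter]
          refine ⟨?_, h0, hTop⟩
          rw [hFk, Set.Finite.mem_toFinset]
          exact hxV
      · left
        rw [hS0, Set.Finite.mem_toFinset]
        exact h0
    calc g k ≤ (S0 ∪ NT).card ^ d := card_le_pow_of_bdry hd _ _ hbdry
      _ ≤ (S0.card + NT.card) ^ d := Nat.pow_le_pow_left (Finset.card_union_le _ _) d
      _ ≤ N := by
          rw [hN]
          exact Nat.pow_le_pow_left (by omega) d
  -- monotone bounded ⇒ attains max
  have hmono : ∀ {k l : ℕ}, k ≤ l → g k ≤ g l := by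
    intro k l hkl
    apply Finset.card_le_card
    intro y hy
    rw [Set.Finite.mem_toFinset] at hy ⊢
    exact V_mono hkl hy
  have hbdd : BddAbove (Set.range g) := ⟨N, by rintro _ ⟨k, rfl⟩; exact hgN k⟩
  obtain ⟨K, hK⟩ := Nat.sSup_mem (Set.range_nonempty g) hbdd
  refine ⟨K, fun k => ?_⟩
  have h1 : (evolve κ μ0 T K).V ⊆ (evolve κ μ0 T (max k K)).V := V_mono (le_max_right k K)
  have h2 : g (max k K) ≤ g K := by
    rw [hK]
    exact le_csSup hbdd ⟨max k K, rfl⟩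
  have heq : (fin (max k K)).toFinset = (fin K).toFinset := by
    refine (Finset.eq_of_subset_of_card_le ?_ h2).symm
    intro y hy
    rw [Set.Finite.mem_toFinset] at hy ⊢
    exact h1 hy
  have hVeq : (evolve κ μ0 T (max k K)).V = (evolve κ μ0 T K).V := by
    rw [← (fin (max k K)).coe_toFinset, ← (fin K).coe_toFinset, heq]
  intro y hy
  rw [← hVeq]
  exact V_mono (le_max_left k K) hy
end Stab

section Final
variable {d : ℕ} {κ : ℝ} {μ0 : Site d → ℝ} {T : ℕ → Site d}

lemma unbounded_increments {f : ℕ → ℝ} (hmono : Monotone f) {UB ε : ℝ}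
    (hUB : ∀ k, f k ≤ UB) (hε : 0 < ε) {S : Set ℕ} (hS : S.Infinite)
    (hinc : ∀ k ∈ S, f k + ε ≤ f (k + 1)) : False := by
  have key : ∀ n : ℕ, ∃ k, f 0 + n * ε ≤ f k := by
    intro n
    induction n with
    | zero => exact ⟨0, by simp⟩
    | succ m ih =>
      obtain ⟨k, hk⟩ := ih
      obtain ⟨k', hk'S, hkk'⟩ := hS.exists_gt k
      refine ⟨k' + 1, ?_⟩
      have h1 : f k ≤ f k' := hmono (le_of_lt hkk')
      have h2 := hinc k' hk'S
      push_cast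
      linarith
  obtain ⟨n, hn⟩ := exists_nat_gt ((UB - f 0) / ε)
  obtain ⟨k, hk⟩ := key n
  have : (UB - f 0) / ε * ε < n * ε := by
    exact mul_lt_mul_of_pos_right hn hε
  rw [div_mul_cancel₀ _ (ne_of_gt hε)] at this
  have := hUB k
  linarith

lemma evolve_le_stab (hd : 0 < d) (hμ0 : IsMassDist μ0) (hκ : 0 < κ)
    {V : Set (Site d)} {u : Site d → ℝ} (hst : IsStabilizingPair μ0 κ V u) (k : ℕ) :
    (evolve κ μ0 T k).V ⊆ V ∧ ∀ x, (evolve κ μ0 T k).u x ≤ u x := by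
  obtain ⟨hVfin, hsupp, hupos, hu0, hlapint, hubd, hflux⟩ := hst
  have h2d : (0:ℝ) < 2 * d := by positivity
  induction k with
  | zero => exact ⟨hsupp, fun x => hupos x⟩
  | succ n ih =>
    obtain ⟨ihV, ihu⟩ := ih
    set c := evolve κ μ0 T n with hc
    set x := T n with hx
    by_cases hU : Unstable κ c x
    · obtain ⟨iFin, iPos, iSupp, iLap, iuPos, iuSupp, iTop, iRet⟩ := inv (T := T) hd hμ0 hκ n
      set w : Site d → ℝ := fun y => u y - c.u y with hw
      have hwpos : ∀ y, 0 ≤ w y := fun y => by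
        rw [hw]; simp only []; linarith [ihu y]
      have hwlap : -(w x) ≤ lap w x := by
        unfold lap
        have hterm : ∀ i : Fin d, (-2:ℝ) * w x ≤ (w (x + Pi.single i 1) - w x) +
            (w (x - Pi.single i 1) - w x) := by
          intro i
          have h1 := hwpos (x + Pi.single i 1)
          have h2 := hwpos (x - Pi.single i 1)
          linarith
        have hsum := Finset.sum_le_sum (fun i (_ : i ∈ Finset.univ) => hterm i)
        rw [Finset.sum_const] at hsum
        have hcard : (Finset.univ : Finset (Fin d)).card = d := by simp
        rw [hcard] at hsum
        have hpos : (0:ℝ) < 1 / (2 * (d:ℝ)) := by positivity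
        have := mul_le_mul_of_nonneg_left hsum (le_of_lt hpos)
        calc -(w x) = (1 / (2 * (d:ℝ))) * ((d : ℕ) • ((-2:ℝ) * w x)) := by
              rw [nsmul_eq_mul]
              field_simp
          _ ≤ _ := this
      have hwlap' : lap w x = lap u x - lap c.u x := by
        have : w = fun y => u y - c.u y := rfl
        rw [this, lap_sub]
      have hxV : x ∈ V := ihV hU.mem_V
      by_cases hbd : x ∈ bdry V
      · -- contradiction: x cannot be unstable
        exfalso
        have hux : u x = 0 := hubd x hbd
        have hwx : w x = -(c.u x) := by rw [hw]; simp only []; rw [hux]; ring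
        have hμn : c.μ x ≤ κ := by
          have h1 := hflux x hbd
          have h2 := iLap x
          have h3 : c.u x ≤ u x := ihu x
          -- c.μ x = μ0 x + lap c.u x = (μ0 x + lap u x) - lap w x ≤ κ + w x
          have h4 : c.μ x = (μ0 x + lap u x) - lap w x := by
            rw [hwlap']; linarith
          have h5 : -(lap w x) ≤ w x := by linarith [hwlap]
          have h6 : w x ≤ 0 := by rw [hwx]; linarith [iuPos x]
          linarith
        rcases hU with ⟨_, hκμ⟩ | ⟨hintn, _⟩
        · linarith
        · -- x interior of V_n: all nbrs in V_n ⊆ V, so x not on bdry V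
          obtain ⟨_, hnb⟩ := mem_intr_iff.mp hintn
          obtain ⟨_, y, hxy, hyV⟩ := hbd
          exact hyV (ihV (hnb y hxy))
      · -- x is interior to V
        have hint : x ∈ intr V := ⟨hxV, hbd⟩
        have hnbV : ∀ y, nbr x y → y ∈ V := (mem_intr_iff.mp hint).2
        constructor
        · rw [evolve_succ, topple_V hU]
          rintro y (hy | hy)
          · exact ihV hy
          · exact hnbV y hy
        · intro y
          rw [evolve_succ, topple_u hU]
          by_cases h1 : y = x
          · rw [if_pos h1, h1]
            have hlapu : lap u x = -(μ0 x) := hlapint x hint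
            have h2 := iLap x
            have h4 : c.μ x = -(lap w x) := by
              rw [hwlap', hlapu]; linarith
            have h5 : -(lap w x) ≤ w x := by linarith [hwlap]
            have h6 : w x = u x - c.u x := rfl
            linarith
          · rw [if_neg h1, add_zero]
            exact ihu y
    · rw [evolve_succ, topple_stable hU]
      exact ⟨ihV, ihu⟩
end Final

/-- Minimality principle. Let `μ₀` be a mass distribution on `ℤ^d`
with finite support and `κ > 0`. Let `T` be any infinitive toppling sequence for
`BS(μ₀, κ)` and let `V₀ = ⋃_k V_k` be the final set of visited sites along `T`. Then
`V₀` equals the intersection of all sets `V ⊆ ℤ^d` for which there exists a function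
`u` such that `(V, u)` is a stabilizing pair for `BS(μ₀, κ)`. -/
theorem stmt5 {d : ℕ} (hd : 2 ≤ d) (μ0 : Site d → ℝ) (hμ0 : IsMassDist μ0)
    (κ : ℝ) (hκ : 0 < κ) (T : ℕ → Site d) (hT : Infinitive T) :
    (⋃ k : ℕ, (evolve κ μ0 T k).V) =
      ⋂₀ {V : Set (Site d) | ∃ u : Site d → ℝ, IsStabilizingPair μ0 κ V u} := by
  classical
  have hd1 : 0 < d := by omega
  have h2d : (0:ℝ) < 2 * d := by positivity
  obtain ⟨K, hK⟩ := V_eventually_const (T := T) hd hμ0 hκ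
  set Vf := (evolve κ μ0 T K).V with hVf
  have hVeq : ∀ k, K ≤ k → (evolve κ μ0 T k).V = Vf := fun k hk =>
    subset_antisymm (hK k) (V_mono hk)
  have hUnion : (⋃ k : ℕ, (evolve κ μ0 T k).V) = Vf := by
    apply subset_antisymm
    · exact Set.iUnion_subset hK
    · exact Set.subset_iUnion (fun k => (evolve κ μ0 T k).V) K
  have iPos : ∀ k x, 0 ≤ (evolve κ μ0 T k).μ x := fun k => (inv (T := T) hd1 hμ0 hκ k).2.1
  have iLap : ∀ k x, (evolve κ μ0 T k).μ x = μ0 x + lap (evolve κ μ0 T k).u x :=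
    fun k => (inv (T := T) hd1 hμ0 hκ k).2.2.2.1
  have iuPos : ∀ k x, 0 ≤ (evolve κ μ0 T k).u x :=
    fun k => (inv (T := T) hd1 hμ0 hκ k).2.2.2.2.1
  have iuSupp : ∀ k x, (evolve κ μ0 T k).u x ≠ 0 → Toppled κ μ0 T k x :=
    fun k => (inv (T := T) hd1 hμ0 hκ k).2.2.2.2.2.1
  have iTop : ∀ k x, Toppled κ μ0 T k x → x ∈ (evolve κ μ0 T k).V ∧
      ∀ y, nbr x y → y ∈ (evolve κ μ0 T k).V :=
    fun k => (inv (T := T) hd1 hμ0 hκ k).2.2.2.2.2.2.1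
  set FK := ((inv (T := T) hd1 hμ0 hκ K).1).toFinset with hFK
  have hFKV : ↑FK = Vf := Set.Finite.coe_toFinset _
  have hVsubF : ∀ k, (evolve κ μ0 T k).V ⊆ ↑FK := fun k => by rw [hFKV]; exact hK k
  set S := ∑ y ∈ FK, sq y with hS
  set M := ∑ y ∈ FK, μ0 y with hM
  have hSpos : 0 ≤ S := Finset.sum_nonneg fun y _ => sq_nonneg' y
  have hMpos : 0 ≤ M := Finset.sum_nonneg fun y _ => hμ0.1 y
  have hUB : ∀ k x, (evolve κ μ0 T k).u x ≤ S * M := by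
    intro k x
    obtain ⟨hmass, hmom⟩ := sum_inv hd1 hμ0 hκ k FK (hVsubF k)
    have h1 : ∑ y ∈ FK, (evolve κ μ0 T k).u y ≤ S * M := by
      have h2 : ∑ y ∈ FK, (evolve κ μ0 T k).μ y * sq y ≤ S * M := by
        calc ∑ y ∈ FK, (evolve κ μ0 T k).μ y * sq y
            ≤ ∑ y ∈ FK, (evolve κ μ0 T k).μ y * S := by
              refine Finset.sum_le_sum fun y hy => ?_
              refine mul_le_mul_of_nonneg_left ?_ (iPos k y)
              exact Finset.single_le_sum (fun z (_ : z ∈ FK) => sq_nonneg' z) hy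
          _ = S * ∑ y ∈ FK, (evolve κ μ0 T k).μ y := by rw [← Finset.sum_mul]; ring
          _ = S * M := by rw [hmass]
      have h3 : 0 ≤ ∑ y ∈ FK, μ0 y * sq y :=
        Finset.sum_nonneg fun y _ => mul_nonneg (hμ0.1 y) (sq_nonneg' y)
      linarith
    by_cases hx : x ∈ FK
    · have := Finset.single_le_sum (fun z (_ : z ∈ FK) => iuPos k z) hx
      linarith
    · have hzero : (evolve κ μ0 T k).u x = 0 := by
        by_contra hne
        have htop := iuSupp k x hne
        exact hx (hVsubF k (iTop k x htop).1)
      rw [hzero]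
      positivity
  set uf : Site d → ℝ := fun x => ⨆ k, (evolve κ μ0 T k).u x with huf
  have hmoku : ∀ x, Monotone fun k => (evolve κ μ0 T k).u x := by
    intro x k l hkl
    exact u_mono hd1 hμ0 hκ hkl x
  have hbddu : ∀ x, BddAbove (Set.range fun k => (evolve κ μ0 T k).u x) := by
    intro x
    exact ⟨S * M, by rintro _ ⟨k, rfl⟩; exact hUB k x⟩
  have htend : ∀ x, Tendsto (fun k => (evolve κ μ0 T k).u x) atTop (nhds (uf x)) :=
    fun x => tendsto_atTop_ciSup (hmoku x) (hbddu x)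
  have hufle : ∀ k x, (evolve κ μ0 T k).u x ≤ uf x := fun k x => le_ciSup (hbddu x) k
  have hufpos : ∀ x, 0 ≤ uf x := fun x => le_trans (iuPos 0 x) (hufle 0 x)
  have hlapt : ∀ x, Tendsto (fun k => lap (evolve κ μ0 T k).u x) atTop (nhds (lap uf x)) := by
    intro x
    unfold lap
    apply Tendsto.const_mul
    apply tendsto_finset_sum
    intro i _
    exact ((htend _).sub (htend x)).add ((htend _).sub (htend x))
  have hμt : ∀ x, Tendsto (fun k => (evolve κ μ0 T k).μ x) atTop (nhds (μ0 x + lap uf x)) := by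
    intro x
    have heq : (fun k => (evolve κ μ0 T k).μ x) =
        fun k => μ0 x + lap (evolve κ μ0 T k).u x := by
      funext k; exact iLap k x
    rw [heq]
    exact tendsto_const_nhds.add (hlapt x)
  have hμinf_pos : ∀ x, 0 ≤ μ0 x + lap uf x :=
    fun x => ge_of_tendsto (hμt x) (Filter.Eventually.of_forall fun k => iPos k x)
  have hufsupp : ∀ x, x ∉ intr Vf → uf x = 0 := by
    intro x hx
    by_contra hne
    have hex : ∃ k, (evolve κ μ0 T k).u x ≠ 0 := by
      by_contra hall
      push_neg at hall
      apply hne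
      rw [huf]
      have hz : (fun k => (evolve κ μ0 T k).u x) = fun _ => (0:ℝ) := funext hall
      show (⨆ k, (evolve κ μ0 T k).u x) = 0
      rw [hz, ciSup_const]
    obtain ⟨k, hk⟩ := hex
    have htop := iuSupp k x hk
    obtain ⟨hxV, hnb⟩ := iTop k x htop
    apply hx
    rw [mem_intr_iff]
    exact ⟨hK k hxV, fun y hy => hK k (hnb y hy)⟩
  have hintlap : ∀ x ∈ intr Vf, lap uf x = -μ0 x := by
    intro x hx
    have h0 : 0 ≤ μ0 x + lap uf x := hμinf_pos x
    by_contra hne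
    have hpos : 0 < μ0 x + lap uf x := by
      rcases lt_or_eq_of_le h0 with h | h
      · exact h
      · exfalso; apply hne; linarith
    set cinf := μ0 x + lap uf x with hcinf
    have hev : ∀ᶠ k in atTop, cinf / 2 < (evolve κ μ0 T k).μ x :=
      (hμt x).eventually (eventually_gt_nhds (by linarith))
    obtain ⟨K1, hK1⟩ := eventually_atTop.mp hev
    set m := max K K1 with hm
    have hSinf : ({k | T k = x} \ Set.Iio m).Infinite := (hT x).diff (Set.finite_Iio m)
    refine unbounded_increments (hmoku x) (fun k => hUB k x)
      (by linarith : (0:ℝ) < cinf/2) hSinf ?_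
    intro k hkS
    obtain ⟨hTk, hk2⟩ := hkS
    simp only [Set.mem_Iio, not_lt] at hk2
    have hkK : K ≤ k := le_trans (le_max_left _ _) hk2
    have hkK1 : K1 ≤ k := le_trans (le_max_right _ _) hk2
    have hμk : cinf / 2 < (evolve κ μ0 T k).μ x := hK1 k hkK1
    have hUk : Unstable κ (evolve κ μ0 T k) x := by
      right
      refine ⟨?_, by linarith⟩
      rw [show (evolve κ μ0 T k).V = Vf from hVeq k hkK]
      exact hx
    have hTk' : T k = x := hTk
    have hstep : (evolve κ μ0 T (k+1)).u x
        = (evolve κ μ0 T k).u x + (evolve κ μ0 T k).μ x := by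
      rw [evolve_succ, hTk', topple_u hUk, if_pos rfl]
    linarith
  have hbdlap : ∀ x ∈ bdry Vf, μ0 x + lap uf x ≤ κ := by
    intro x hx
    by_contra hgt
    push_neg at hgt
    have hev : ∀ᶠ k in atTop, κ < (evolve κ μ0 T k).μ x :=
      (hμt x).eventually (eventually_gt_nhds hgt)
    obtain ⟨K1, hK1⟩ := eventually_atTop.mp hev
    set m := max K K1 with hm
    have hSinf : ({k | T k = x} \ Set.Iio m).Infinite := (hT x).diff (Set.finite_Iio m)
    refine unbounded_increments (hmoku x) (fun k => hUB k x) hκ hSinf ?_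
    intro k hkS
    obtain ⟨hTk, hk2⟩ := hkS
    simp only [Set.mem_Iio, not_lt] at hk2
    have hkK : K ≤ k := le_trans (le_max_left _ _) hk2
    have hkK1 : K1 ≤ k := le_trans (le_max_right _ _) hk2
    have hμk : κ < (evolve κ μ0 T k).μ x := hK1 k hkK1
    have hUk : Unstable κ (evolve κ μ0 T k) x := by
      left
      refine ⟨?_, hμk⟩
      rw [show (evolve κ μ0 T k).V = Vf from hVeq k hkK]
      exact hx
    have hTk' : T k = x := hTk
    have hstep : (evolve κ μ0 T (k+1)).u x
        = (evolve κ μ0 T k).u x + (evolve κ μ0 T k).μ x := by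
      rw [evolve_succ, hTk', topple_u hUk, if_pos rfl]
    linarith
  have hstab : IsStabilizingPair μ0 κ Vf uf := by
    refine ⟨(inv (T := T) hd1 hμ0 hκ K).1, ?_, hufpos, hufsupp, hintlap, ?_, hbdlap⟩
    · exact fun x hx => hK 0 hx
    · exact fun x hx => hufsupp x (fun hi => hi.2 hx)
  rw [hUnion]
  apply Set.Subset.antisymm
  · intro x hx
    rw [Set.mem_sInter]
    rintro V' ⟨u', hst'⟩
    exact (evolve_le_stab (T := T) hd1 hμ0 hκ hst' K).1 hx
  · intro x hx
    exact Set.mem_sInter.mp hx Vf ⟨uf, hstab⟩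

end Sandpile
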